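/- arXiv:0710.5360 — 6 statements merged into one kernel-verified Lean document; each statement's English description precedes it below -/
import Mathlib

section
/- For every positive integer n and every positive integer p, one has (-1)^{p+1} · n · ∫₀¹ (1-t)^{n-1} (log t)^p dt = p! · Σ_{k=1}^{n} C(n,k) · (-1)^k / k^p. -/
open MeasureTheory Set Real

lemma aux_integrable (r : ℝ) (p : ℕ) (hr : 0 < r) :
    IntegrableOn (fun x : ℝ => x ^ p * Real.exp (-(r * x))) (Ioi 0) := by
  have h := Real.GammaIntegral_convergent (s := (p : ℝ) + 1) (by positivity)
  have h2 := (integrableOn_Ioi_comp_mul_left_iff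
      (fun x => Real.exp (-x) * x ^ ((p : ℝ) + 1 - 1)) 0 hr).mpr (by simpa using h)
  have h3 : IntegrableOn (fun x : ℝ => (r ^ p)⁻¹ * (Real.exp (-(r * x)) * (r * x) ^ ((p : ℝ) + 1 - 1))) (Ioi 0) := h2.const_mul _
  refine h3.congr_fun (fun x hx => ?_) measurableSet_Ioi
  have hx0 : (0:ℝ) < x := hx
  have : ((r * x) ^ ((p : ℝ) + 1 - 1)) = r ^ p * x ^ p := by
    rw [add_sub_cancel_right, Real.rpow_natCast, mul_pow]
  dsimp only
  rw [this]
  field_simp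

lemma img_exp_neg : (fun u : ℝ => Real.exp (-u)) '' Ioi 0 = Ioo 0 1 := by
  ext x
  constructor
  · rintro ⟨u, hu, rfl⟩
    exact ⟨Real.exp_pos _, by
      rw [Real.exp_lt_one_iff]; simpa using (mem_Ioi.mp hu)⟩
  · rintro ⟨hx0, hx1⟩
    exact ⟨-Real.log x, by simpa using Real.log_neg hx0 hx1, by
      simp [Real.exp_log hx0]⟩

lemma hasDeriv_exp_neg (u : ℝ) :
    HasDerivAt (fun u : ℝ => Real.exp (-u)) (-Real.exp (-u)) u := by
  simpa [mul_comm, Function.comp_def] using ((Real.hasDerivAt_exp (-u)).comp u ((hasDerivAt_id u).neg))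

lemma inj_exp_neg : InjOn (fun u : ℝ => Real.exp (-u)) (Ioi 0) := by
  intro a _ b _ h
  have := Real.exp_eq_exp.mp h
  linarith

lemma subst_eq (g : ℝ → ℝ) :
    ∫ t in Ioo (0:ℝ) 1, g t = ∫ u in Ioi (0:ℝ), Real.exp (-u) * g (Real.exp (-u)) := by
  rw [← img_exp_neg, integral_image_eq_integral_abs_deriv_smul measurableSet_Ioi
    (fun u _ => (hasDeriv_exp_neg u).hasDerivWithinAt) inj_exp_neg]
  simp [abs_of_pos (Real.exp_pos _)]

lemma gamma_val (r : ℝ) (p : ℕ) (hr : 0 < r) :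
    ∫ x in Ioi (0:ℝ), x ^ p * Real.exp (-(r * x)) = p.factorial / r ^ (p + 1) := by
  have h := Real.integral_rpow_mul_exp_neg_mul_Ioi (a := (p : ℝ) + 1) (r := r)
    (by positivity) hr
  rw [Real.Gamma_nat_eq_factorial] at h
  rw [show ((p:ℝ) + 1) = ((p + 1 : ℕ) : ℝ) by push_cast; ring, Real.rpow_natCast] at h
  calc ∫ x in Ioi (0:ℝ), x ^ p * Real.exp (-(r * x))
      = ∫ t in Ioi (0:ℝ), t ^ (((p + 1 : ℕ) : ℝ) - 1) * Real.exp (-(r * t)) := by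
        refine setIntegral_congr_fun measurableSet_Ioi (fun x hx => ?_)
        rw [show ((p + 1 : ℕ) : ℝ) - 1 = ((p : ℕ) : ℝ) by push_cast; ring, Real.rpow_natCast]
    _ = (1 / r) ^ (p + 1) * p.factorial := h
    _ = p.factorial / r ^ (p + 1) := by rw [one_div, inv_pow]; field_simp

lemma key (j p : ℕ) :
    ∫ t in (0:ℝ)..1, t ^ j * Real.log t ^ p
      = (-1 : ℝ) ^ p * p.factorial / ((j : ℝ) + 1) ^ (p + 1) := by
  rw [intervalIntegral.integral_of_le zero_le_one, integral_Ioc_eq_integral_Ioo,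
    subst_eq (fun t => t ^ j * Real.log t ^ p)]
  have : ∀ u ∈ Ioi (0:ℝ), Real.exp (-u) * (Real.exp (-u) ^ j * Real.log (Real.exp (-u)) ^ p)
      = (-1 : ℝ) ^ p * (u ^ p * Real.exp (-(((j : ℝ) + 1) * u))) := by
    intro u _
    have he : Real.exp (-u) * Real.exp (-((j:ℝ) * u)) = Real.exp (-(((j:ℝ) + 1) * u)) := by
      rw [← Real.exp_add]; ring_nf
    rw [Real.log_exp, ← Real.exp_nat_mul, mul_neg, neg_pow]
    linear_combination ((-1:ℝ) ^ p * u ^ p) * he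
  rw [setIntegral_congr_fun measurableSet_Ioi this, integral_const_mul,
    gamma_val _ p (by positivity)]
  ring

lemma keyIntegrable (j p : ℕ) :
    IntervalIntegrable (fun t : ℝ => t ^ j * Real.log t ^ p) volume 0 1 := by
  rw [intervalIntegrable_iff_integrableOn_Ioo_of_le zero_le_one]
  rw [← img_exp_neg, integrableOn_image_iff_integrableOn_abs_deriv_smul measurableSet_Ioi
    (fun u _ => (hasDeriv_exp_neg u).hasDerivWithinAt) inj_exp_neg]
  have h : IntegrableOn (fun u : ℝ => ((-1:ℝ) ^ p) * (u ^ p * Real.exp (-(((j:ℝ) + 1) * u)))) (Ioi 0) :=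
    (aux_integrable ((j : ℝ) + 1) p (by positivity)).const_mul _
  refine h.congr_fun (fun u hu => ?_) measurableSet_Ioi
  simp only [abs_neg, abs_of_pos (Real.exp_pos _), smul_eq_mul]
  have he : Real.exp (-u) * Real.exp (-((j:ℝ) * u)) = Real.exp (-(((j:ℝ) + 1) * u)) := by
    rw [← Real.exp_add]; ring_nf
  rw [Real.log_exp, ← Real.exp_nat_mul, mul_neg, neg_pow]
  linear_combination (-((-1:ℝ) ^ p * u ^ p)) * he

theorem stmt_0 (n p : ℕ) (hn : 0 < n) (hp : 0 < p) :
    (-1 : ℝ) ^ (p + 1) * n * ∫ t in (0:ℝ)..1, (1 - t) ^ (n - 1) * (Real.log t) ^ p =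
      (p.factorial : ℝ) * ∑ k ∈ Finset.Icc 1 n, (n.choose k : ℝ) * (-1) ^ k / (k : ℝ) ^ p := by
  have hint : ∀ t : ℝ, (1 - t) ^ (n - 1) * Real.log t ^ p
      = ∑ j ∈ Finset.range n, (((n-1).choose j : ℝ) * (-1)^j) * (t ^ j * Real.log t ^ p) := by
    intro t
    rw [sub_eq_add_neg, add_comm, add_pow]
    rw [show n - 1 + 1 = n from Nat.succ_pred_eq_of_pos hn, Finset.sum_mul]
    refine Finset.sum_congr rfl fun j _ => ?_
    rw [neg_pow]
    ring
  rw [intervalIntegral.integral_congr (fun t _ => hint t)]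
  rw [intervalIntegral.integral_finset_sum
    (fun j _ => (keyIntegrable j p).const_mul _)]
  simp_rw [intervalIntegral.integral_const_mul, key]
  rw [Finset.mul_sum, Finset.mul_sum, ← Finset.Ico_add_one_right_eq_Icc, Finset.sum_Ico_eq_sum_range]
  rw [show n + 1 - 1 = n from rfl]
  refine Finset.sum_congr rfl fun i hi => ?_
  have hnat := Nat.add_one_mul_choose_eq (n-1) i
  rw [show n - 1 + 1 = n from Nat.succ_pred_eq_of_pos hn] at hnat
  have h1 : (n : ℝ) * ((n-1).choose i : ℝ) = (n.choose (i+1) : ℝ) * ((i:ℝ)+1) := by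
    exact_mod_cast congrArg (Nat.cast (R := ℝ)) hnat
  have hx : ((i:ℝ)+1) ≠ 0 := by positivity
  rw [show (1 + i) = (i + 1) from by ring]
  push_cast
  have hS : ((-1:ℝ)) ^ (p * 2) = 1 := Even.neg_one_pow ⟨p, by ring⟩
  field_simp
  linear_combination (-((-1:ℝ)^i * (1+(i:ℝ))^p * (n:ℝ) * (((n-1).choose i : ℕ):ℝ))) * hS
    - ((-1:ℝ)^i * (1+(i:ℝ))^p) * h1
end

section
/- For every integer q ≥ 2, Σ_{n=1}^{∞} H_n / n^q = - ∫₀¹ Li_{q-1}(1-t) · (log t)/(1-t) dt, where H_n = Σ_{k=1}^n 1/k and Li_s(x) = Σ_{n=1}^{∞} x^n/n^s. -/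
set_option maxHeartbeats 1000000

open MeasureTheory Real Filter Set
open scoped Topology

/-- The n-th harmonic number `H_n = ∑_{k=1}^n 1/k`. -/
noncomputable def H (n : ℕ) : ℝ := ∑ k ∈ Finset.Icc 1 n, (1 : ℝ) / k

/-- The polylogarithm `Li_s(x) = ∑_{n=1}^∞ x^n / n^s`. -/
noncomputable def Li (s : ℕ) (x : ℝ) : ℝ := ∑' n : ℕ, x ^ (n + 1) / ((n : ℝ) + 1) ^ s

lemma H_eq (m : ℕ) : H m = ∑ j ∈ Finset.range m, (1:ℝ)/((j:ℝ)+1) := by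
  induction m with
  | zero => simp [H]
  | succ n ih =>
    rw [Finset.sum_range_succ, ← ih, H, H, Finset.sum_Icc_succ_top (by omega)]
    push_cast; ring

/-- Telescoping partial fractions sum. -/
lemma hasSum_partial (m : ℕ) (hm : 1 ≤ m) :
    HasSum (fun k : ℕ => 1/((((k:ℝ)+1))*((k:ℝ)+(m:ℝ)+1))) (H m / m) := by
  have hnonneg : ∀ k : ℕ, 0 ≤ 1/((((k:ℝ)+1))*((k:ℝ)+(m:ℝ)+1)) := by
    intro k; positivity
  have hmpos : (0:ℝ) < m := by exact_mod_cast hm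
  rw [hasSum_iff_tendsto_nat_of_nonneg hnonneg]
  have hform : ∀ N : ℕ, ∑ k ∈ Finset.range N, 1/((((k:ℝ)+1))*((k:ℝ)+(m:ℝ)+1))
      = (1/(m:ℝ)) * ∑ j ∈ Finset.range m, ((1:ℝ)/((j:ℝ)+1) - 1/((N:ℝ)+(j:ℝ)+1)) := by
    intro N
    induction N with
    | zero => simp
    | succ N ih =>
      rw [Finset.sum_range_succ, ih]
      have htel : ∑ j ∈ Finset.range m,
          ((1:ℝ)/((N:ℝ)+(j:ℝ)+1) - 1/((N:ℝ)+((j:ℝ)+1)+1))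
          = 1/((N:ℝ)+1) - 1/((N:ℝ)+(m:ℝ)+1) := by
        have := Finset.sum_range_sub' (fun j : ℕ => (1:ℝ)/((N:ℝ)+(j:ℝ)+1)) m
        simpa using this
      have hsplit : ∑ j ∈ Finset.range m, ((1:ℝ)/((j:ℝ)+1) - 1/((N:ℝ)+1+(j:ℝ)+1))
          = ∑ j ∈ Finset.range m, ((1:ℝ)/((j:ℝ)+1) - 1/((N:ℝ)+(j:ℝ)+1))
            + ∑ j ∈ Finset.range m, ((1:ℝ)/((N:ℝ)+(j:ℝ)+1) - 1/((N:ℝ)+((j:ℝ)+1)+1)) := by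
        rw [← Finset.sum_add_distrib]
        refine Finset.sum_congr rfl fun j _ => by ring
      push_cast
      rw [hsplit, htel, mul_add]
      have hN : ((N:ℝ)+1) ≠ 0 := by positivity
      have hNm : ((N:ℝ)+(m:ℝ)+1) ≠ 0 := by positivity
      field_simp
      ring
  simp only [hform]
  have hlim : Tendsto (fun N : ℕ => (1/(m:ℝ)) *
      ∑ j ∈ Finset.range m, ((1:ℝ)/((j:ℝ)+1) - 1/((N:ℝ)+(j:ℝ)+1)))
      atTop (𝓝 ((1/(m:ℝ)) * ∑ j ∈ Finset.range m, ((1:ℝ)/((j:ℝ)+1) - 0))) := by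
    refine Tendsto.const_mul _ (tendsto_finset_sum _ fun j _ => ?_)
    refine Tendsto.const_sub _ ?_
    have h1 : Tendsto (fun N : ℕ => (N:ℝ)+(j:ℝ)+1) atTop atTop := by
      apply tendsto_atTop_add_const_right
      apply tendsto_atTop_add_const_right
      exact tendsto_natCast_atTop_atTop
    simpa [one_div, Pi.inv_def] using h1.inv_tendsto_atTop
  convert hlim using 2
  rw [H_eq]
  simp [div_eq_mul_inv, mul_comm]

lemma tsum_inner (q n : ℕ) (hq : 2 ≤ q) :
    ∑' k : ℕ, 1/(((n:ℝ)+1)^(q-1) * (((k:ℝ)+1) * ((n:ℝ)+(k:ℝ)+2)))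
      = H (n+1) / ((n:ℝ)+1)^q := by
  have h := (hasSum_partial (n+1) (by omega)).div_const (((n:ℝ)+1)^(q-1))
  have h2 : (fun k : ℕ => 1/((((k:ℝ)+1))*((k:ℝ)+((n+1:ℕ):ℝ)+1)) / ((n:ℝ)+1)^(q-1))
      = fun k : ℕ => 1/(((n:ℝ)+1)^(q-1) * (((k:ℝ)+1) * ((n:ℝ)+(k:ℝ)+2))) := by
    funext k; push_cast
    rw [div_div]
    ring_nf
  rw [h2] at h
  rw [h.tsum_eq]
  have hpow : ((n:ℝ)+1)^(q-1) * ((n:ℝ)+1) = ((n:ℝ)+1)^q := by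
    rw [← pow_succ, Nat.sub_add_cancel (by omega)]
  push_cast
  rw [div_div, mul_comm (((n:ℝ)+1)) (((n:ℝ)+1)^(q-1)), hpow]

lemma summable_three_half : Summable (fun n : ℕ => 1/(((n:ℝ)+1) * Real.sqrt ((n:ℝ)+1))) := by
  have h : Summable (fun n : ℕ => ((n:ℝ)) ^ (-(3/2):ℝ)) :=
    Real.summable_nat_rpow.mpr (by norm_num)
  have h2 := (summable_nat_add_iff 1).mpr h
  refine h2.congr fun n => ?_
  have hpos : (0:ℝ) < (n:ℝ)+1 := by positivity
  rw [show (((n+1:ℕ):ℝ)) = ((n:ℝ)+1) by push_cast; ring]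
  rw [Real.rpow_neg hpos.le, show (3/2:ℝ) = 1 + 1/2 by norm_num,
    Real.rpow_add hpos, Real.rpow_one, ← Real.sqrt_eq_rpow, one_div]

lemma master_summable (q : ℕ) (hq : 2 ≤ q) :
    Summable (fun p : ℕ × ℕ =>
      1/(((p.1:ℝ)+1)^(q-1) * (((p.2:ℝ)+1) * ((p.1:ℝ)+(p.2:ℝ)+2)))) := by
  have hs := Summable.mul_of_nonneg summable_three_half summable_three_half
    (fun n => by positivity) (fun k => by positivity)
  refine Summable.of_nonneg_of_le (fun p => by positivity) (fun p => ?_) hs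
  obtain ⟨n, k⟩ := p
  simp only
  rw [div_mul_div_comm, one_mul]
  have hn : (0:ℝ) < (n:ℝ)+1 := by positivity
  have hk : (0:ℝ) < (k:ℝ)+1 := by positivity
  refine one_div_le_one_div_of_le (by positivity) ?_
  have h1 : ((n:ℝ)+1) ≤ ((n:ℝ)+1)^(q-1) := by
    calc ((n:ℝ)+1) = ((n:ℝ)+1)^1 := (pow_one _).symm
    _ ≤ ((n:ℝ)+1)^(q-1) := pow_le_pow_right₀ (by linarith) (by omega)
  have h2 : Real.sqrt ((n:ℝ)+1) * Real.sqrt ((k:ℝ)+1) ≤ (n:ℝ)+(k:ℝ)+2 := by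
    rw [← Real.sqrt_mul hn.le]
    have : ((n:ℝ)+1)*((k:ℝ)+1) ≤ ((n:ℝ)+(k:ℝ)+2)^2 := by nlinarith [sq_nonneg ((n:ℝ)-(k:ℝ))]
    calc Real.sqrt (((n:ℝ)+1)*((k:ℝ)+1)) ≤ Real.sqrt (((n:ℝ)+(k:ℝ)+2)^2) :=
          Real.sqrt_le_sqrt this
    _ = (n:ℝ)+(k:ℝ)+2 := Real.sqrt_sq (by positivity)
  calc ((n:ℝ)+1) * Real.sqrt ((n:ℝ)+1) * (((k:ℝ)+1) * Real.sqrt ((k:ℝ)+1))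
      = ((n:ℝ)+1) * (((k:ℝ)+1) * (Real.sqrt ((n:ℝ)+1) * Real.sqrt ((k:ℝ)+1))) := by ring
    _ ≤ ((n:ℝ)+1) * (((k:ℝ)+1) * ((n:ℝ)+(k:ℝ)+2)) := by
        refine mul_le_mul_of_nonneg_left (mul_le_mul_of_nonneg_left h2 hk.le) hn.le
    _ ≤ ((n:ℝ)+1)^(q-1) * (((k:ℝ)+1) * ((n:ℝ)+(k:ℝ)+2)) := by
        refine mul_le_mul_of_nonneg_right h1 (by positivity)

lemma li_summable (r : ℕ) {x : ℝ} (hx0 : 0 ≤ x) (hx1 : x < 1) :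
    Summable (fun n : ℕ => x^(n+1)/((n:ℝ)+1)^r) := by
  refine Summable.of_nonneg_of_le (fun n => by positivity) (fun n => ?_)
    (summable_geometric_of_lt_one hx0 hx1)
  have h1 : (1:ℝ) ≤ ((n:ℝ)+1)^r := one_le_pow₀ (by linarith [Nat.cast_nonneg (α := ℝ) n])
  calc x^(n+1)/((n:ℝ)+1)^r ≤ x^(n+1)/1 := by
        refine div_le_div_of_nonneg_left ?_ ?_ h1 <;> positivity
  _ = x * x^n := by rw [div_one, pow_succ, mul_comm]
  _ ≤ 1 * x^n := by refine mul_le_mul_of_nonneg_right hx1.le (by positivity)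
  _ = x^n := one_mul _

lemma pointwise (q : ℕ) (hq : 2 ≤ q) {x : ℝ} (hx : x ∈ Ioo (0:ℝ) 1) :
    -(Li (q-1) x * Real.log (1-x) / x)
      = ∑' p : ℕ × ℕ, x^(p.1+p.2+1) / (((p.1:ℝ)+1)^(q-1) * ((p.2:ℝ)+1)) := by
  obtain ⟨hx0, hx1⟩ := hx
  have ha : Summable (fun n : ℕ => x^(n+1)/((n:ℝ)+1)^(q-1)) := li_summable _ hx0.le hx1
  have hb : HasSum (fun k : ℕ => x^(k+1)/((k:ℝ)+1)) (-Real.log (1-x)) :=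
    Real.hasSum_pow_div_log_of_abs_lt_one (by rw [abs_of_pos hx0]; exact hx1)
  have hab : Summable (fun p : ℕ × ℕ =>
      (x^(p.1+1)/((p.1:ℝ)+1)^(q-1)) * (x^(p.2+1)/((p.2:ℝ)+1))) :=
    Summable.mul_of_nonneg ha hb.summable (fun n => by positivity) (fun k => by positivity)
  have hmul := Summable.tsum_mul_tsum ha hb.summable hab
  rw [hb.tsum_eq] at hmul
  have hLi : Li (q-1) x = ∑' n : ℕ, x^(n+1)/((n:ℝ)+1)^(q-1) := rfl
  have hxne : x ≠ 0 := ne_of_gt hx0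
  have : -(Li (q-1) x * Real.log (1-x) / x) = (Li (q-1) x * (-Real.log (1-x))) / x := by
    ring
  rw [this, hLi, hmul, ← tsum_div_const]
  refine tsum_congr fun p => ?_
  obtain ⟨n, k⟩ := p
  simp only
  have hpow : x^(n+1)*x^(k+1) = x^(n+k+1)*x := by
    rw [← pow_add, ← pow_succ]
    congr 1
    omega
  rw [div_mul_div_comm, div_div, hpow, mul_div_mul_right _ _ hxne]

theorem stmt_2 (q : ℕ) (hq : 2 ≤ q) :
    ∑' n : ℕ, H (n + 1) / ((n : ℝ) + 1) ^ q =
      -∫ t in (0:ℝ)..1, Li (q - 1) (1 - t) * Real.log t / (1 - t) := by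
  have hsub : (∫ t in (0:ℝ)..1, Li (q-1) (1-t) * Real.log t / (1-t))
      = ∫ x in (0:ℝ)..1, Li (q-1) x * Real.log (1-x) / x := by
    have h := intervalIntegral.integral_comp_sub_left
      (a := (0:ℝ)) (b := 1) (fun u => Li (q-1) u * Real.log (1-u) / u) 1
    simp only [sub_zero, sub_self] at h
    rw [← h]
    refine intervalIntegral.integral_congr fun t _ => ?_
    simp [sub_sub_cancel]
  rw [hsub, intervalIntegral.integral_of_le zero_le_one, integral_Ioc_eq_integral_Ioo,
    ← MeasureTheory.integral_neg]
  set g : ℕ × ℕ → ℝ → ℝ :=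
    fun p x => x^(p.1+p.2+1) / (((p.1:ℝ)+1)^(q-1) * ((p.2:ℝ)+1)) with hg
  set c : ℕ × ℕ → ℝ :=
    fun p => 1/(((p.1:ℝ)+1)^(q-1) * (((p.2:ℝ)+1) * ((p.1:ℝ)+(p.2:ℝ)+2))) with hc
  have hcont : ∀ p : ℕ × ℕ, Continuous (g p) := fun p =>
    (continuous_pow _).div_const _
  have hint : ∀ p : ℕ × ℕ, IntegrableOn (g p) (Ioo (0:ℝ) 1) := fun p =>
    ((hcont p).integrableOn_Icc).mono_set Ioo_subset_Icc_self
  have hnn : ∀ p : ℕ × ℕ, 0 ≤ᵐ[volume.restrict (Ioo (0:ℝ) 1)] g p := by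
    intro p
    filter_upwards [ae_restrict_mem measurableSet_Ioo] with x hx
    have : (0:ℝ) < x := hx.1
    positivity
  have hval : ∀ p : ℕ × ℕ, ∫ x in Ioo (0:ℝ) 1, g p x = c p := by
    intro p
    rw [← integral_Ioc_eq_integral_Ioo, ← intervalIntegral.integral_of_le zero_le_one]
    simp only [hg, hc]
    rw [intervalIntegral.integral_div, integral_pow]
    push_cast
    rw [one_pow, zero_pow (by positivity), div_div]
    rw [sub_zero]
    congr 1
    ring
  have hmaster := master_summable q hq
  have hcnn : ∀ p : ℕ × ℕ, 0 ≤ c p := fun p => by positivity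
  have hfin : ∑' p : ℕ × ℕ, ∫⁻ x in Ioo (0:ℝ) 1, ‖g p x‖₊ ≠ ⊤ := by
    have hl : ∀ p : ℕ × ℕ, ∫⁻ x in Ioo (0:ℝ) 1, ‖g p x‖₊ = ENNReal.ofReal (c p) := by
      intro p
      rw [lintegral_congr_ae ((hnn p).mono fun x hx => by
          exact Real.enorm_eq_ofReal hx),
        ← ofReal_integral_eq_lintegral_ofReal (hint p) (hnn p), hval p]
    simp only [hl]
    rw [← ENNReal.ofReal_tsum_of_nonneg hcnn hmaster]
    exact ENNReal.ofReal_ne_top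
  have heq : ∫ x in Ioo (0:ℝ) 1, -(Li (q-1) x * Real.log (1-x) / x)
      = ∫ x in Ioo (0:ℝ) 1, ∑' p : ℕ × ℕ, g p x := by
    refine integral_congr_ae ?_
    filter_upwards [ae_restrict_mem measurableSet_Ioo] with x hx
    exact pointwise q hq hx
  rw [heq, integral_tsum (fun p => (hcont p).aestronglyMeasurable) hfin]
  calc ∑' n : ℕ, H (n+1) / ((n:ℝ)+1)^q
      = ∑' (n : ℕ) (k : ℕ), c (n, k) := by
        refine (tsum_congr fun n => ?_).symm
        exact tsum_inner q n hq
    _ = ∑' p : ℕ × ℕ, c p := (Summable.tsum_prod' hmaster fun n => hmaster.prod_factor n).symm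
    _ = ∑' p : ℕ × ℕ, ∫ x in Ioo (0:ℝ) 1, g p x := by
        exact (tsum_congr fun p => (hval p).symm)
end

section
/- Σ_{n=1}^{∞} H_n / n³ = (1/2)·ζ(2)², where H_n = Σ_{k=1}^n 1/k is the n-th harmonic number and ζ is the Riemann zeta function. -/
open scoped ENNReal NNReal
open Real

namespace EulerSumAux

/-- Fiberwise decomposition of a double sum by antidiagonals. -/
lemma fiber_anti (f : ℕ × ℕ → ℝ≥0∞) :
    ∑' p : ℕ × ℕ, f p = ∑' s : ℕ, ∑ p ∈ Finset.HasAntidiagonal.antidiagonal s, f p := by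
  rw [← ENNReal.tsum_fiberwise f (fun p => p.1 + p.2)]
  refine tsum_congr fun s => ?_
  have h : ((fun p : ℕ × ℕ => p.1 + p.2) ⁻¹' {s}) = ↑(Finset.HasAntidiagonal.antidiagonal s) := by
    ext p; simp [Finset.HasAntidiagonal.mem_antidiagonal]
  rw [h, ← Finset.tsum_subtype (Finset.HasAntidiagonal.antidiagonal s) f]; rfl

lemma H_succ (n : ℕ) : H (n + 1) = H n + 1 / ((n : ℝ) + 1) := by
  have := Finset.sum_Icc_succ_top (a := 1) (b := n) (f := fun k : ℕ => (1 : ℝ) / k)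
    (Nat.one_le_iff_ne_zero.mpr (Nat.succ_ne_zero n))
  simpa [H, Nat.cast_add, Nat.cast_one] using this

lemma H_eq_range (n : ℕ) : H (n + 1) = ∑ k ∈ Finset.range (n + 1), 1 / ((k : ℝ) + 1) := by
  induction n with
  | zero => simp [H]
  | succ n ih =>
      rw [Finset.sum_range_succ, H_succ, ih]

lemma H_pos (n : ℕ) : 0 < H (n + 1) := by
  rw [H_eq_range]
  refine Finset.sum_pos (fun k _ => by positivity) ⟨0, by simp⟩

/-- The terms. -/
noncomputable def G (p : ℕ × ℕ) : ℝ≥0∞ :=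
  ENNReal.ofReal (1 / (((p.1 : ℝ) + 1) ^ 2 * ((p.2 : ℝ) + 1) ^ 2))
noncomputable def W (p : ℕ × ℕ) : ℝ≥0∞ :=
  ENNReal.ofReal (1 / (((p.1 : ℝ) + 1) ^ 2 * ((p.1 : ℝ) + (p.2 : ℝ) + 2) ^ 2))
noncomputable def T (p : ℕ × ℕ) : ℝ≥0∞ :=
  ENNReal.ofReal (1 / (((p.1 : ℝ) + 1) * ((p.2 : ℝ) + 1) * ((p.1 : ℝ) + (p.2 : ℝ) + 2) ^ 2))
noncomputable def V (p : ℕ × ℕ) : ℝ≥0∞ :=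
  ENNReal.ofReal (1 / (((p.1 : ℝ) + 1) * ((p.1 : ℝ) + (p.2 : ℝ) + 2) ^ 3))
noncomputable def F2 (n : ℕ) : ℝ≥0∞ := ENNReal.ofReal (1 / ((n : ℝ) + 1) ^ 2)
noncomputable def F4 (n : ℕ) : ℝ≥0∞ := ENNReal.ofReal (1 / ((n : ℝ) + 1) ^ 4)
noncomputable def E (n : ℕ) : ℝ≥0∞ := ENNReal.ofReal (H (n + 1) / ((n : ℝ) + 1) ^ 3)

/-- ζ(4) (ENNReal). -/
lemma Z4_eq : ∑' n : ℕ, F4 n = ENNReal.ofReal (π ^ 4 / 90) := by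
  have h := hasSum_zeta_four
  have h1 : ENNReal.ofReal (π ^ 4 / 90) = ∑' n : ℕ, ENNReal.ofReal (1 / (n : ℝ) ^ 4) := by
    rw [← h.tsum_eq]
    exact ENNReal.ofReal_tsum_of_nonneg (fun n => by positivity) h.summable
  rw [h1, tsum_eq_zero_add' (f := fun n : ℕ => ENNReal.ofReal (1 / (n : ℝ) ^ 4))
    ENNReal.summable]
  norm_num
  refine tsum_congr fun n => ?_
  unfold F4; congr 1; push_cast; ring

lemma Z2_eq : ∑' n : ℕ, F2 n = ENNReal.ofReal (π ^ 2 / 6) := by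
  have h := hasSum_zeta_two
  have h1 : ENNReal.ofReal (π ^ 2 / 6) = ∑' n : ℕ, ENNReal.ofReal (1 / (n : ℝ) ^ 2) := by
    rw [← h.tsum_eq]
    exact ENNReal.ofReal_tsum_of_nonneg (fun n => by positivity) h.summable
  rw [h1, tsum_eq_zero_add' (f := fun n : ℕ => ENNReal.ofReal (1 / (n : ℝ) ^ 2))
    ENNReal.summable]
  norm_num
  refine tsum_congr fun n => ?_
  unfold F2; congr 1; push_cast; ring

lemma W_ne_zero (p : ℕ × ℕ) : W p ≠ 0 := by
  unfold W
  simp only [ne_eq, ENNReal.ofReal_eq_zero, not_le]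
  positivity

lemma F4_ne_zero (n : ℕ) : F4 n ≠ 0 := by
  unfold F4
  simp only [ne_eq, ENNReal.ofReal_eq_zero, not_le]
  positivity

/-- Cauchy product: ∑ G = (∑ F2)². -/
lemma sumG_eq : ∑' p : ℕ × ℕ, G p = (∑' n : ℕ, F2 n) * (∑' n : ℕ, F2 n) := by
  rw [ENNReal.tsum_prod' (f := G)]
  have hGF : ∀ a b : ℕ, G (a, b) = F2 a * F2 b := by
    intro a b
    unfold G F2
    rw [← ENNReal.ofReal_mul (by positivity)]
    congr 1
    rw [one_div, one_div, one_div, mul_inv]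
  calc ∑' (a : ℕ) (b : ℕ), G (a, b) = ∑' (a : ℕ) (b : ℕ), F2 a * F2 b := by
        exact tsum_congr fun a => tsum_congr fun b => hGF a b
    _ = ∑' a : ℕ, F2 a * ∑' b : ℕ, F2 b := by
        exact tsum_congr fun a => ENNReal.tsum_mul_left
    _ = (∑' n : ℕ, F2 n) * (∑' n : ℕ, F2 n) := ENNReal.tsum_mul_right

lemma sumL : ∑' p : ℕ × ℕ, (if p.1 < p.2 then G p else 0) = ∑' p : ℕ × ℕ, W p := by
  apply tsum_eq_tsum_of_ne_zero_bij
    (fun q : Function.support W => (q.1.1, q.1.1 + q.1.2 + 1))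
  · rintro ⟨⟨a, b⟩, _⟩ ⟨⟨c, d⟩, _⟩ h
    simp only [Prod.mk.injEq] at h
    apply Subtype.ext
    simp only [Prod.mk.injEq]
    omega
  · rintro ⟨a, b⟩ hp
    have hab : a < b := by
      by_contra hab
      exact hp (by simp [if_neg hab])
    exact ⟨⟨(a, b - a - 1), W_ne_zero _⟩, Prod.ext rfl (by simp; omega)⟩
  · rintro ⟨⟨a, b⟩, _⟩
    have hlt : a < a + b + 1 := by omega
    simp only [if_pos hlt]
    unfold G W
    congr 1
    push_cast
    ring

lemma sumR : ∑' p : ℕ × ℕ, (if p.2 < p.1 then G p else 0) = ∑' p : ℕ × ℕ, W p := by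
  apply tsum_eq_tsum_of_ne_zero_bij
    (fun q : Function.support W => (q.1.1 + q.1.2 + 1, q.1.1))
  · rintro ⟨⟨a, b⟩, _⟩ ⟨⟨c, d⟩, _⟩ h
    simp only [Prod.mk.injEq] at h
    apply Subtype.ext
    simp only [Prod.mk.injEq]
    omega
  · rintro ⟨a, b⟩ hp
    have hab : b < a := by
      by_contra hab
      exact hp (by simp [if_neg hab])
    exact ⟨⟨(b, a - b - 1), W_ne_zero _⟩, Prod.ext (by simp; omega) rfl⟩
  · rintro ⟨⟨a, b⟩, _⟩
    have hlt : a < a + b + 1 := by omega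
    simp only [if_pos hlt]
    unfold G W
    congr 1
    push_cast
    ring

lemma sumD : ∑' p : ℕ × ℕ, (if p.1 = p.2 then G p else 0) = ∑' n : ℕ, F4 n := by
  apply tsum_eq_tsum_of_ne_zero_bij
    (fun q : Function.support F4 => ((q.1 : ℕ), (q.1 : ℕ)))
  · rintro ⟨a, _⟩ ⟨c, _⟩ h
    simp only [Prod.mk.injEq] at h
    exact Subtype.ext h.1
  · rintro ⟨a, b⟩ hp
    have hab : a = b := by
      by_contra hab
      exact hp (by simp [if_neg hab])
    exact ⟨⟨a, F4_ne_zero _⟩, Prod.ext rfl (by simp [hab])⟩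
  · rintro ⟨a, _⟩
    rw [if_pos rfl]
    unfold G F4
    congr 1
    rw [show (((a : ℝ) + 1) ^ 2 * ((a : ℝ) + 1) ^ 2) = ((a : ℝ) + 1) ^ 4 by ring]

/-- Trichotomy: ∑ G = ∑W + Z4 + ∑W. -/
lemma trichotomy :
    ∑' p : ℕ × ℕ, G p = (∑' p : ℕ × ℕ, W p) + (∑' p : ℕ × ℕ, W p) + (∑' n : ℕ, F4 n) := by
  have hsplit : ∀ p : ℕ × ℕ, G p
      = (if p.1 < p.2 then G p else 0)
        + ((if p.2 < p.1 then G p else 0) + (if p.1 = p.2 then G p else 0)) := by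
    intro p
    rcases Nat.lt_trichotomy p.1 p.2 with h | h | h
    · simp [h, Nat.lt_asymm h, Nat.ne_of_lt h]
    · simp [h]
    · simp [h, Nat.lt_asymm h, (Nat.ne_of_lt h).symm]
  rw [tsum_congr hsplit, ENNReal.tsum_add, ENNReal.tsum_add, sumL, sumR, sumD]
  ring

/-- Partial fractions: ∑ G = 2∑W + 2∑T. -/
lemma swap_sum (f : ℕ × ℕ → ℝ≥0∞) : ∑' p : ℕ × ℕ, f (p.2, p.1) = ∑' p : ℕ × ℕ, f p := by
  have := (Equiv.prodComm ℕ ℕ).tsum_eq f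
  rw [← this]
  exact tsum_congr fun p => rfl

lemma partialfrac :
    ∑' p : ℕ × ℕ, G p
      = (∑' p : ℕ × ℕ, W p) + (∑' p : ℕ × ℕ, W p) + ((∑' p : ℕ × ℕ, T p) + (∑' p : ℕ × ℕ, T p)) := by
  have hsplit : ∀ p : ℕ × ℕ, G p = W p + W (p.2, p.1) + (T p + T p) := by
    intro p
    unfold G W T
    rw [← ENNReal.ofReal_add (by positivity) (by positivity),
        ← ENNReal.ofReal_add (by positivity) (by positivity),
        ← ENNReal.ofReal_add (by positivity) (by positivity)]
    congr 1
    have h1 : ((p.1 : ℝ) + 1) ≠ 0 := by positivity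
    have h2 : ((p.2 : ℝ) + 1) ≠ 0 := by positivity
    have h3 : ((p.1 : ℝ) + (p.2 : ℝ) + 2) ≠ 0 := by positivity
    field_simp
    ring
  rw [tsum_congr hsplit, ENNReal.tsum_add, ENNReal.tsum_add, ENNReal.tsum_add, swap_sum W]

/-- T = 2 V. -/
lemma T_eq_two_V : ∑' p : ℕ × ℕ, T p = (∑' p : ℕ × ℕ, V p) + (∑' p : ℕ × ℕ, V p) := by
  have hsplit : ∀ p : ℕ × ℕ, T p = V p + V (p.2, p.1) := by
    intro p
    unfold T V
    rw [← ENNReal.ofReal_add (by positivity) (by positivity)]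
    congr 1
    have h1 : ((p.1 : ℝ) + 1) ≠ 0 := by positivity
    have h2 : ((p.2 : ℝ) + 1) ≠ 0 := by positivity
    have h3 : ((p.1 : ℝ) + (p.2 : ℝ) + 2) ≠ 0 := by positivity
    field_simp
    ring
  rw [tsum_congr hsplit, ENNReal.tsum_add, swap_sum V]

/-- V, summed by antidiagonals. -/
lemma sumV_eq : ∑' p : ℕ × ℕ, V p = ∑' s : ℕ, ENNReal.ofReal (H (s + 1) / ((s : ℝ) + 2) ^ 3) := by
  rw [fiber_anti V]
  refine tsum_congr fun s => ?_
  rw [Finset.Nat.sum_antidiagonal_eq_sum_range_succ_mk]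
  have hterm : ∀ k ∈ Finset.range (s + 1),
      V (k, s - k) = ENNReal.ofReal ((1 / ((k : ℝ) + 1)) * (1 / ((s : ℝ) + 2) ^ 3)) := by
    intro k hk
    have hk' : k ≤ s := Nat.lt_succ_iff.mp (Finset.mem_range.mp hk)
    unfold V
    congr 1
    rw [Nat.cast_sub hk']
    have h1 : ((k : ℝ) + 1) ≠ 0 := by positivity
    have h3 : ((s : ℝ) + 2) ≠ 0 := by positivity
    have h4 : ((k : ℝ) + ((s : ℝ) - (k : ℝ)) + 2) = (s : ℝ) + 2 := by ring
    rw [h4]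
    field_simp
  rw [Finset.sum_congr rfl hterm,
      ← ENNReal.ofReal_sum_of_nonneg (fun i _ => by positivity), ← Finset.sum_mul]
  congr 1
  rw [H_eq_range]
  ring

/-- A = ∑V + Z4. -/
lemma A_eq : ∑' n : ℕ, E n = (∑' p : ℕ × ℕ, V p) + (∑' n : ℕ, F4 n) := by
  rw [sumV_eq, tsum_eq_zero_add' (f := E) ENNReal.summable,
      tsum_eq_zero_add' (f := F4) ENNReal.summable]
  have hE0 : E 0 = ENNReal.ofReal 1 := by
    unfold E H
    norm_num
  have hF40 : F4 0 = ENNReal.ofReal 1 := by unfold F4; norm_num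
  have hEn : ∀ n : ℕ,
      E (n + 1) = ENNReal.ofReal (H (n + 1) / ((n : ℝ) + 2) ^ 3) + F4 (n + 1) := by
    intro n
    unfold E F4
    rw [← ENNReal.ofReal_add (div_nonneg (H_pos n).le (by positivity)) (by positivity)]
    congr 1
    rw [H_succ (n + 1)]
    have h2 : ((n : ℝ) + 1 + 1) ≠ 0 := by positivity
    push_cast
    field_simp
    ring
  rw [hE0, hF40, tsum_congr hEn, ENNReal.tsum_add]
  ring

lemma A_val : ∑' n : ℕ, H (n + 1) / ((n : ℝ) + 1) ^ 3 = π ^ 4 / 72 := by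
  have hGne : ∑' p : ℕ × ℕ, G p ≠ ⊤ := by
    rw [sumG_eq, Z2_eq]
    exact ENNReal.mul_ne_top ENNReal.ofReal_ne_top ENNReal.ofReal_ne_top
  have hWW_ne : (∑' p : ℕ × ℕ, W p) + (∑' p : ℕ × ℕ, W p) ≠ ⊤ := by
    refine ne_top_of_le_ne_top hGne ?_
    rw [trichotomy]
    exact le_self_add
  have hZ4TT : (∑' n : ℕ, F4 n) = (∑' p : ℕ × ℕ, T p) + (∑' p : ℕ × ℕ, T p) :=
    (ENNReal.add_right_inj hWW_ne).mp (trichotomy.symm.trans partialfrac)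
  have hVV : ((∑' p : ℕ × ℕ, V p) + (∑' p : ℕ × ℕ, V p))
      + ((∑' p : ℕ × ℕ, V p) + (∑' p : ℕ × ℕ, V p)) = ∑' n : ℕ, F4 n := by
    rw [hZ4TT, T_eq_two_V]
  have key : (4 : ℝ≥0∞) * ∑' n : ℕ, E n = 5 * ENNReal.ofReal (π ^ 4 / 90) := by
    calc (4 : ℝ≥0∞) * ∑' n : ℕ, E n
        = (((∑' p : ℕ × ℕ, V p) + (∑' p : ℕ × ℕ, V p))
            + ((∑' p : ℕ × ℕ, V p) + (∑' p : ℕ × ℕ, V p))) + 4 * (∑' n : ℕ, F4 n) := by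
          rw [A_eq]; ring
      _ = (∑' n : ℕ, F4 n) + 4 * (∑' n : ℕ, F4 n) := by rw [hVV]
      _ = 5 * (∑' n : ℕ, F4 n) := by ring
      _ = 5 * ENNReal.ofReal (π ^ 4 / 90) := by rw [Z4_eq]
  have h4 := congrArg ENNReal.toReal key
  rw [ENNReal.toReal_mul, ENNReal.toReal_mul,
      ENNReal.tsum_toReal_eq (f := E) (fun n => by unfold E; exact ENNReal.ofReal_ne_top),
      ENNReal.toReal_ofReal (by positivity)] at h4
  have hE : ∀ n : ℕ, (E n).toReal = H (n + 1) / ((n : ℝ) + 1) ^ 3 := fun n =>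
    ENNReal.toReal_ofReal (div_nonneg (H_pos n).le (by positivity))
  rw [tsum_congr hE] at h4
  norm_num at h4
  linarith

end EulerSumAux

theorem stmt_8 :
    ((∑' n : ℕ, H (n + 1) / ((n : ℝ) + 1) ^ 3 : ℝ) : ℂ) = (1 / 2) * (riemannZeta 2) ^ 2 := by
  rw [EulerSumAux.A_val, riemannZeta_two]
  push_cast
  ring
end

section
/- For every integer q ≥ 3, Σ_{n=1}^{∞} H_n² / n^q = ∫₀¹ ∫₀¹ Li_{q-2}[(1-t)(1-u)] · (log t)(log u) / ((1-t)(1-u)) du dt, where H_n = Σ_{k=1}^n 1/k and Li_s(x) = Σ_{n=1}^∞ x^n/n^s. -/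
open MeasureTheory intervalIntegral Set

lemma H_succ (n : ℕ) : H (n+1) = H n + 1/((n:ℝ)+1) := by
  unfold H
  rw [Finset.sum_Icc_succ_top (Nat.le_add_left 1 n)]
  push_cast; ring

lemma H_range (m : ℕ) : H m = ∑ k ∈ Finset.range m, 1/((k:ℝ)+1) := by
  induction m with
  | zero => simp [H]
  | succ n ih => rw [H_succ, ih, Finset.sum_range_succ]

lemma H_nonneg (m : ℕ) : 0 ≤ H m := by
  rw [H_range]
  exact Finset.sum_nonneg fun k _ => by positivity

lemma H_le_self (m : ℕ) : H m ≤ m := by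
  rw [H_range]
  calc ∑ k ∈ Finset.range m, 1/((k:ℝ)+1) ≤ ∑ k ∈ Finset.range m, 1 := by
        refine Finset.sum_le_sum fun k _ => ?_
        rw [div_le_one (by positivity)]
        have : (0:ℝ) ≤ k := Nat.cast_nonneg k
        linarith
    _ = m := by simp


lemma H_le_sqrt (m : ℕ) : H m ≤ 2 * Real.sqrt m := by
  induction m with
  | zero => simp [H]
  | succ n ih =>
    rw [H_succ]
    push_cast
    set a := Real.sqrt n with hadef
    set b := Real.sqrt ((n:ℝ)+1) with hbdef
    have ha2 : a^2 = n := Real.sq_sqrt (Nat.cast_nonneg n)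
    have hb2 : b^2 = (n:ℝ)+1 := Real.sq_sqrt (by positivity)
    have hb1 : 1 ≤ b := by
      rw [hbdef, Real.le_sqrt (by norm_num) (by positivity)]
      norm_num [Nat.cast_nonneg (α := ℝ) n]
    have ha0 : 0 ≤ a := Real.sqrt_nonneg _
    have hab : a ≤ b := Real.sqrt_le_sqrt (by push_cast; linarith [Nat.cast_nonneg (α := ℝ) n])
    have key : 1/((n:ℝ)+1) ≤ 2*(b - a) := by
      rw [div_le_iff₀ (by positivity)]
      nlinarith [sq_nonneg (b-a)]
    linarith

open MeasureTheory intervalIntegral Set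

lemma intInt (n : ℕ) : IntervalIntegrable (fun t : ℝ => (1-t)^n * Real.log t)
    MeasureTheory.volume 0 1 := by
  have hg : IntervalIntegrable (fun t : ℝ => 2 * t ^ (-(1/2) : ℝ)) volume 0 1 :=
    (intervalIntegrable_rpow' (by norm_num)).const_mul 2
  apply hg.mono_fun
  · exact (((measurable_const.sub measurable_id).pow_const n).mul
      Real.measurable_log).aestronglyMeasurable
  · rw [Set.uIoc_of_le (by norm_num : (0:ℝ) ≤ 1)]
    filter_upwards [ae_restrict_mem measurableSet_Ioc] with t ht
    obtain ⟨ht0, ht1⟩ := ht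
    have hrp : (0:ℝ) < t ^ (-(1/2) : ℝ) := Real.rpow_pos_of_pos ht0 _
    have h1 : -Real.log t ≤ 2 * t ^ (-(1/2) : ℝ) := by
      have := Real.log_le_sub_one_of_pos hrp
      rw [Real.log_rpow ht0] at this
      linarith
    have hflog : |Real.log t| = -Real.log t := by
      rw [abs_of_nonpos (Real.log_nonpos (le_of_lt ht0) ht1)]
    have hp : (0:ℝ) ≤ (1-t)^n := pow_nonneg (by linarith) n
    have hp1 : (1-t)^n ≤ 1 := pow_le_one₀ (by linarith) (by linarith)
    simp only [Real.norm_eq_abs, abs_mul]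
    calc |(1-t)^n| * |Real.log t| ≤ 1 * |Real.log t| := by
          apply mul_le_mul_of_nonneg_right _ (abs_nonneg _)
          rw [abs_of_nonneg hp]; exact hp1
      _ = -Real.log t := by rw [one_mul, hflog]
      _ ≤ 2 * t ^ (-(1/2) : ℝ) := h1
      _ = |2| * |t ^ (-(1/2) : ℝ)| := by
          rw [abs_of_nonneg (by norm_num : (0:ℝ) ≤ 2), abs_of_nonneg hrp.le]

noncomputable def Faux (n : ℕ) (t : ℝ) : ℝ :=
  ((1 - (1-t)^(n+1)) * Real.log t
    - ∑ k ∈ Finset.range (n+1), (1 - (1-t)^(k+1))/((k:ℝ)+1)) / ((n:ℝ)+1)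

lemma hP (n : ℕ) (t : ℝ) :
    t * ∑ k ∈ Finset.range (n+1), (1-t)^k = 1 - (1-t)^(n+1) := by
  linear_combination (-1 : ℝ) * geom_sum_mul (1-t) (n+1)

lemma Faux_cont (n : ℕ) : Continuous (Faux n) := by
  have hFeq : Faux n = fun t =>
      ((∑ k ∈ Finset.range (n+1), (1-t)^k) * (t * Real.log t)
        - ∑ k ∈ Finset.range (n+1), (1 - (1-t)^(k+1))/((k:ℝ)+1)) / ((n:ℝ)+1) := by
    funext t
    unfold Faux
    rw [← hP n t]
    ring
  rw [hFeq]
  apply Continuous.div_const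
  apply Continuous.sub
  · exact (continuous_finset_sum _ fun k _ =>
      (continuous_const.sub continuous_id).pow k).mul Real.continuous_mul_log
  · exact continuous_finset_sum _ fun k _ =>
      (continuous_const.sub ((continuous_const.sub continuous_id).pow (k+1))).div_const _

lemma Faux_deriv (n : ℕ) (t : ℝ) (ht : t ∈ Set.Ioo (0:ℝ) 1) :
    HasDerivAt (Faux n) ((1-t)^n * Real.log t) t := by
  obtain ⟨ht0, _⟩ := ht
  have hd : HasDerivAt (fun s : ℝ => 1 - s) (-1) t := (hasDerivAt_id t).const_sub 1
  have h1 : HasDerivAt (fun s : ℝ => 1 - (1-s)^(n+1)) (((n:ℝ)+1) * (1-t)^n) t := by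
    have := (hd.fun_pow (n+1)).const_sub 1
    refine this.congr_deriv ?_
    simp only [Nat.add_sub_cancel]
    push_cast; ring
  have hlog : HasDerivAt Real.log t⁻¹ t := Real.hasDerivAt_log (ne_of_gt ht0)
  have h2 := h1.fun_mul hlog
  have h3 : HasDerivAt
      (fun s => ∑ k ∈ Finset.range (n+1), (1 - (1-s)^(k+1))/((k:ℝ)+1))
      (∑ k ∈ Finset.range (n+1), (1-t)^k) t := by
    apply HasDerivAt.fun_sum
    intro k _
    have := ((hd.fun_pow (k+1)).const_sub 1).div_const ((k:ℝ)+1)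
    refine this.congr_deriv ?_
    have hk : ((k:ℝ)+1) ≠ 0 := by positivity
    simp only [Nat.add_sub_cancel]
    push_cast
    field_simp
  have h4 := (h2.fun_sub h3).div_const ((n:ℝ)+1)
  refine h4.congr_deriv ?_
  have hn : ((n:ℝ)+1) ≠ 0 := by positivity
  have h5 : (1 - (1-t)^(n+1)) * t⁻¹ = ∑ k ∈ Finset.range (n+1), (1-t)^k := by
    rw [← hP n t]
    field_simp
  rw [show ((n:ℝ)+1) * (1-t)^n * Real.log t + (1 - (1-t)^(n+1)) * t⁻¹
      - ∑ k ∈ Finset.range (n+1), (1-t)^k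
      = ((n:ℝ)+1) * (1-t)^n * Real.log t by rw [h5]; ring]
  field_simp

lemma key_integral (n : ℕ) :
    ∫ t in (0:ℝ)..1, (1-t)^n * Real.log t = -(H (n+1)) / ((n:ℝ)+1) := by
  rw [integral_eq_sub_of_hasDeriv_right_of_le zero_le_one (Faux_cont n).continuousOn
    (fun t ht => (Faux_deriv n t ht).hasDerivWithinAt) (intInt n)]
  simp [Faux, Real.log_one, H_range]

lemma key_integral_Ioc (n : ℕ) :
    ∫ t in Set.Ioc (0:ℝ) 1, (1-t)^n * Real.log t = -(H (n+1)) / ((n:ℝ)+1) := by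
  rw [← intervalIntegral.integral_of_le zero_le_one]; exact key_integral n

lemma key_integral_norm (n : ℕ) :
    ∫ t in Set.Ioc (0:ℝ) 1, ‖(1-t)^n * Real.log t‖ = H (n+1) / ((n:ℝ)+1) := by
  have h : ∀ t ∈ Set.Ioc (0:ℝ) 1,
      ‖(1-t)^n * Real.log t‖ = -((1-t)^n * Real.log t) := by
    intro t ht
    obtain ⟨ht0, ht1⟩ := ht
    rw [Real.norm_eq_abs, abs_of_nonpos]
    exact mul_nonpos_of_nonneg_of_nonpos (pow_nonneg (by linarith) n)
      (Real.log_nonpos ht0.le ht1)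
  rw [setIntegral_congr_fun measurableSet_Ioc h, MeasureTheory.integral_neg, key_integral_Ioc]
  ring

lemma intOn (n : ℕ) :
    IntegrableOn (fun t : ℝ => (1-t)^n * Real.log t) (Set.Ioc 0 1) volume :=
  (intInt n).1

lemma measAux (n : ℕ) (c : ℝ) :
    AEStronglyMeasurable (fun t : ℝ => c * ((1-t)^n * Real.log t))
      (volume.restrict (Set.Ioc 0 1)) :=
  ((((measurable_const.sub measurable_id).pow_const n).mul
    Real.measurable_log).const_mul c).aestronglyMeasurable

lemma swap_sum_integral (c : ℕ → ℝ)
    (hc : Summable fun n => |c n| * (H (n+1) / ((n:ℝ)+1))) :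
    ∫ t in Set.Ioc (0:ℝ) 1, ∑' n : ℕ, c n * ((1-t)^n * Real.log t)
      = ∑' n : ℕ, c n * (-(H (n+1)) / ((n:ℝ)+1)) := by
  have heq : ∀ n : ℕ, ∫⁻ t in Set.Ioc (0:ℝ) 1, ‖c n * ((1-t)^n * Real.log t)‖ₑ
      = ENNReal.ofReal (|c n| * (H (n+1)/((n:ℝ)+1))) := by
    intro n
    rw [← ofReal_integral_norm_eq_lintegral_enorm ((intOn n).const_mul (c n))]
    congr 1
    have hfe : (fun t : ℝ => ‖c n * ((1-t)^n * Real.log t)‖)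
        = fun t : ℝ => |c n| * ‖(1-t)^n * Real.log t‖ := by
      funext t; rw [norm_mul, Real.norm_eq_abs]
    rw [hfe, MeasureTheory.integral_const_mul, key_integral_norm]
  have hnn : ∀ n : ℕ, 0 ≤ |c n| * (H (n+1)/((n:ℝ)+1)) := fun n =>
    mul_nonneg (abs_nonneg _) (div_nonneg (H_nonneg _) (by positivity))
  rw [MeasureTheory.integral_tsum (fun n => measAux n (c n)) ?_]
  · exact tsum_congr fun n => by
      rw [MeasureTheory.integral_const_mul, key_integral_Ioc]
  · rw [tsum_congr heq, ← ENNReal.ofReal_tsum_of_nonneg hnn hc]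
    exact ENNReal.ofReal_ne_top

lemma stepA (P : ℕ) (t u : ℝ) :
    Li P ((1-t)*(1-u)) * (Real.log t * Real.log u) / ((1-t)*(1-u))
    = ∑' n : ℕ, ((1-t)^n * Real.log t / ((n:ℝ)+1)^P) * ((1-u)^n * Real.log u) := by
  rcases eq_or_ne ((1-t)*(1-u)) 0 with h | h
  · rcases mul_eq_zero.1 h with h1 | h1
    · have ht : t = 1 := by linarith
      subst ht
      simp [Real.log_one]
    · have hu : u = 1 := by linarith
      subst hu
      simp [Real.log_one]
  · have ht : (1-t) ≠ 0 := left_ne_zero_of_mul h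
    have hu : (1-u) ≠ 0 := right_ne_zero_of_mul h
    unfold Li
    rw [← tsum_mul_right, ← tsum_div_const]
    apply tsum_congr
    intro n
    have hn : ((n:ℝ)+1)^P ≠ 0 := by positivity
    rw [pow_succ, mul_pow]
    field_simp

lemma sum_inv_sq : Summable (fun n : ℕ => 4 * (1/((n:ℝ)+1)^2)) := by
  apply Summable.mul_left
  have h : Summable (fun n : ℕ => 1/((n:ℝ))^2) :=
    Real.summable_one_div_nat_pow.mpr one_lt_two
  have := (summable_nat_add_iff 1).mpr h
  simpa using this

theorem stmt_11 (q : ℕ) (hq : 3 ≤ q) :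
    ∑' n : ℕ, (H (n + 1)) ^ 2 / ((n : ℝ) + 1) ^ q =
      ∫ t in (0:ℝ)..1, ∫ u in (0:ℝ)..1,
        Li (q - 2) ((1 - t) * (1 - u)) * (Real.log t * Real.log u) / ((1 - t) * (1 - u)) := by
  obtain ⟨P, hP1, rfl⟩ : ∃ P, 1 ≤ P ∧ q = P + 2 := ⟨q - 2, by omega, by omega⟩
  simp only [Nat.add_sub_cancel]
  symm
  set d : ℕ → ℝ := fun n => -(H (n+1)) / ((n:ℝ)+1)^(P+1) with hd
  have hinner : ∀ t ∈ Set.Ioc (0:ℝ) 1,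
      (∫ u in (0:ℝ)..1,
        Li P ((1-t)*(1-u)) * (Real.log t * Real.log u) / ((1-t)*(1-u)))
      = ∑' n : ℕ, d n * ((1-t)^n * Real.log t) := by
    intro t ht
    obtain ⟨ht0, ht1⟩ := ht
    rw [intervalIntegral.integral_of_le zero_le_one,
      setIntegral_congr_fun measurableSet_Ioc (fun u _ => stepA P t u)]
    have hsum1 : Summable fun n : ℕ =>
        |(1-t)^n * Real.log t / ((n:ℝ)+1)^P| * (H (n+1) / ((n:ℝ)+1)) := by
      have hgeom : Summable fun n : ℕ => |Real.log t| * (1-t)^n :=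
        (summable_geometric_of_lt_one (by linarith) (by linarith)).mul_left _
      have hnn : ∀ n : ℕ, (0:ℝ) ≤ |(1-t)^n * Real.log t / ((n:ℝ)+1)^P| * (H (n+1) / ((n:ℝ)+1)) :=
        fun n => mul_nonneg (abs_nonneg _) (div_nonneg (H_nonneg _) (by positivity))
      apply Summable.of_nonneg_of_le hnn ?_ hgeom
      intro n
      have h1t : (0:ℝ) ≤ 1 - t := by linarith
      have hen : |(1-t)^n * Real.log t / ((n:ℝ)+1)^P| ≤ (1-t)^n * |Real.log t| := by
        rw [abs_div, abs_mul, abs_of_nonneg (pow_nonneg h1t n),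
          abs_of_nonneg (by positivity : (0:ℝ) ≤ ((n:ℝ)+1)^P)]
        exact div_le_self (by positivity) (one_le_pow₀ (by linarith [Nat.cast_nonneg (α := ℝ) n]))
      have hH : H (n+1)/((n:ℝ)+1) ≤ 1 := by
        rw [div_le_one (by positivity)]
        have := H_le_self (n+1)
        push_cast at this
        linarith
      calc |(1-t)^n * Real.log t / ((n:ℝ)+1)^P| * (H (n+1) / ((n:ℝ)+1))
          ≤ ((1-t)^n * |Real.log t|) * 1 := by
            apply mul_le_mul hen hH
              (div_nonneg (H_nonneg _) (by positivity)) (by positivity)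
        _ = |Real.log t| * (1-t)^n := by ring
    rw [swap_sum_integral _ hsum1]
    apply tsum_congr
    intro n
    have hn1 : ((n:ℝ)+1) ≠ 0 := by positivity
    have hnP : ((n:ℝ)+1)^P ≠ 0 := by positivity
    simp only [hd]
    rw [pow_succ]
    field_simp
  rw [intervalIntegral.integral_of_le zero_le_one,
    setIntegral_congr_fun measurableSet_Ioc hinner]
  have hsum2 : Summable fun n : ℕ => |d n| * (H (n+1) / ((n:ℝ)+1)) := by
    apply Summable.of_nonneg_of_le
      (fun n => mul_nonneg (abs_nonneg _)
        (div_nonneg (H_nonneg _) (by positivity))) ?_ sum_inv_sq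
    intro n
    have hn0 : (0:ℝ) < (n:ℝ)+1 := by positivity
    have hH2 : H (n+1) ≤ 2 * Real.sqrt ((n:ℝ)+1) := by
      have := H_le_sqrt (n+1)
      push_cast at this
      exact this
    have hsq : Real.sqrt ((n:ℝ)+1)^2 = (n:ℝ)+1 := Real.sq_sqrt (by positivity)
    have hH2sq : H (n+1)^2 ≤ 4 * ((n:ℝ)+1) := by
      nlinarith [H_nonneg (n+1), Real.sqrt_nonneg ((n:ℝ)+1)]
    have e1 : |d n| * (H (n+1)/((n:ℝ)+1)) = H (n+1)^2 / ((n:ℝ)+1)^(P+2) := by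
      simp only [hd]
      rw [abs_div, abs_neg, abs_of_nonneg (H_nonneg _),
        abs_of_nonneg (by positivity : (0:ℝ) ≤ ((n:ℝ)+1)^(P+1)), pow_succ]
      field_simp
      ring
    rw [e1]
    have hpow3 : ((n:ℝ)+1)^3 ≤ ((n:ℝ)+1)^(P+2) :=
      pow_le_pow_right₀ (by linarith [Nat.cast_nonneg (α := ℝ) n]) (by omega)
    rw [div_le_iff₀ (by positivity)]
    have hident : (1/((n:ℝ)+1)^2) * ((n:ℝ)+1)^3 = (n:ℝ)+1 := by
      field_simp
    have hmul := mul_le_mul_of_nonneg_left hpow3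
      (by positivity : (0:ℝ) ≤ 1/((n:ℝ)+1)^2)
    nlinarith [hH2sq, hmul, hident]
  rw [swap_sum_integral d hsum2]
  apply tsum_congr
  intro n
  have hn1 : ((n:ℝ)+1) ≠ 0 := by positivity
  simp only [hd]
  rw [show P + 2 = (P+1) + 1 by omega, pow_succ]
  field_simp
  ring
end

section
/- For every real u with 0 < u < 1, ∫₀¹ (log t) / (1 - (1-t)(1-u)) dt = (1/(1-u)) · Li₂(-(1-u)/u), where Li₂ is the dilogarithm (extended to negative arguments, e.g. by Li₂(x) = -∫₀ˣ log(1-s)/s ds). -/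
open Real MeasureTheory intervalIntegral Set Filter Topology

/-- The dilogarithm, defined by `Li₂(x) = -∫₀ˣ log(1-s)/s ds`. -/
noncomputable def Li2 (x : ℝ) : ℝ := -∫ s in (0:ℝ)..x, Real.log (1 - s) / s

noncomputable def gAux : ℝ → ℝ := fun r => if r = 0 then 1 else Real.log (1 + r) / r

lemma gAux_measurable : Measurable gAux := by
  unfold gAux
  exact Measurable.ite (measurableSet_singleton 0) measurable_const
    ((Real.measurable_log.comp (measurable_const.add measurable_id)).div measurable_id)

lemma gAux_continuousAt_zero : ContinuousAt gAux 0 := by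
  have hd : HasDerivAt (fun r : ℝ => Real.log (1 + r)) 1 0 := by
    have h1 : HasDerivAt (fun r : ℝ => 1 + r) 1 0 := (hasDerivAt_id 0).const_add 1
    have := (Real.hasDerivAt_log (by norm_num : (1:ℝ) + 0 ≠ 0)).comp 0 h1
    simpa [Function.comp_def] using this
  have hslope := hasDerivAt_iff_tendsto_slope.mp hd
  have hslope' : Tendsto gAux (𝓝[≠] (0:ℝ)) (𝓝 1) := by
    refine hslope.congr' ?_
    filter_upwards [self_mem_nhdsWithin] with r hr
    simp only [mem_compl_iff, mem_singleton_iff] at hr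
    simp [slope_def_field, gAux, hr, div_eq_inv_mul]
  have : Tendsto gAux (𝓝 (0:ℝ)) (𝓝 1) := by
    rw [← nhdsNE_sup_pure (0:ℝ)]
    exact tendsto_sup.2 ⟨hslope', by simpa [gAux] using tendsto_pure_nhds gAux 0⟩
  simpa [ContinuousAt, gAux] using this

lemma gAux_continuousAt {r : ℝ} (hr : 0 ≤ r) : ContinuousAt gAux r := by
  rcases eq_or_lt_of_le hr with h | h
  · simpa [← h] using gAux_continuousAt_zero
  · have hne : r ≠ 0 := ne_of_gt h
    have : ContinuousAt (fun x : ℝ => Real.log (1 + x) / x) r := by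
      refine ContinuousAt.div ?_ continuousAt_id hne
      exact (Real.continuousAt_log (by positivity)).comp (continuousAt_const.add continuousAt_id)
    refine this.congr ?_
    filter_upwards [isOpen_ne.mem_nhds hne] with x hx
    simp [gAux, hx]

theorem stmt_13 (u : ℝ) (hu : 0 < u) (hu1 : u < 1) :
    ∫ t in (0:ℝ)..1, Real.log t / (1 - (1 - t) * (1 - u)) =
      (1 / (1 - u)) * Li2 (-(1 - u) / u) := by
  have ha : (0:ℝ) < 1 - u := by linarith
  set a : ℝ := 1 - u with ha_def
  set c : ℝ := a / u with hc_def
  have hc : 0 < c := div_pos ha hu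
  have hane : a ≠ 0 := ne_of_gt ha
  have hune : u ≠ 0 := ne_of_gt hu
  set f : ℝ → ℝ := fun t => Real.log t / (u + a * t) with hf_def
  have hpos : ∀ t : ℝ, 0 ≤ t → 0 < u + a * t := fun t ht =>
    add_pos_of_pos_of_nonneg hu (by positivity)
  -- rewrite the integrand
  have hEq : (∫ t in (0:ℝ)..1, Real.log t / (1 - (1 - t) * (1 - u))) = ∫ t in (0:ℝ)..1, f t := by
    refine intervalIntegral.integral_congr fun t _ => ?_
    simp only [hf_def]
    congr 1
    rw [ha_def]; ring
  -- integrability of f on [0,1]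
  have hmeasf : Measurable f :=
    Real.measurable_log.div (measurable_const.add (measurable_id.const_mul a))
  have hbint : IntervalIntegrable (fun t : ℝ => 2 / u * t ^ (-(1:ℝ)/2)) volume 0 1 :=
    (intervalIntegral.intervalIntegrable_rpow' (by norm_num)).const_mul _
  have hint : IntervalIntegrable f volume 0 1 := by
    refine IntervalIntegrable.mono_fun' hbint hmeasf.aestronglyMeasurable.restrict ?_
    rw [Filter.EventuallyLE, ae_restrict_iff' measurableSet_uIoc]
    refine Eventually.of_forall fun t ht => ?_
    rw [uIoc_of_le (by norm_num : (0:ℝ) ≤ 1)] at ht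
    have htpos : 0 < t := ht.1
    have hlognp : Real.log t ≤ 0 := Real.log_nonpos htpos.le ht.2
    have hr : Real.log (t ^ (-(1:ℝ)/2)) = (-(1:ℝ)/2) * Real.log t := Real.log_rpow htpos _
    have h1 : Real.log (t ^ (-(1:ℝ)/2)) ≤ t ^ (-(1:ℝ)/2) - 1 :=
      Real.log_le_sub_one_of_pos (Real.rpow_pos_of_pos htpos _)
    have hnum : -Real.log t ≤ 2 * t ^ (-(1:ℝ)/2) := by
      rw [hr] at h1; linarith
    have hden : u ≤ u + a * t := by nlinarith
    have : ‖f t‖ = (-Real.log t) / (u + a * t) := by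
      rw [Real.norm_eq_abs, hf_def, abs_div, abs_of_nonpos hlognp,
        abs_of_pos (hpos t htpos.le)]
    rw [this]
    calc (-Real.log t) / (u + a * t) ≤ (2 * t ^ (-(1:ℝ)/2)) / u :=
          div_le_div₀ (by positivity) hnum hu hden
      _ = 2 / u * t ^ (-(1:ℝ)/2) := by ring
  -- the primitive L of gAux
  set L : ℝ → ℝ := fun x => ∫ r in (0:ℝ)..x, gAux r with hL_def
  have hgcont : ContinuousOn gAux (Icc 0 c) := fun r hr =>
    (gAux_continuousAt hr.1).continuousWithinAt
  have hgint : ∀ x : ℝ, 0 ≤ x → x ≤ c → IntervalIntegrable gAux volume 0 x := fun x hx hxc =>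
    ContinuousOn.intervalIntegrable_of_Icc hx (hgcont.mono (Icc_subset_Icc le_rfl hxc))
  have hLderiv : ∀ x : ℝ, 0 < x → x ≤ c → HasDerivAt L (gAux x) x := fun x hx hxc =>
    intervalIntegral.integral_hasDerivAt_right (hgint x hx.le hxc)
      gAux_measurable.stronglyMeasurable.stronglyMeasurableAtFilter
      (gAux_continuousAt hx.le)
  -- the antiderivative G
  set G : ℝ → ℝ := fun t =>
    1/a * (Real.log t * (Real.log (u + a*t) - Real.log u)) - 1/a * L (c*t) with hG_def
  have hGderiv : ∀ t : ℝ, 0 < t → t ≤ 1 → HasDerivAt G (f t) t := by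
    intro t ht ht1
    have hd1 : HasDerivAt Real.log t⁻¹ t := Real.hasDerivAt_log (ne_of_gt ht)
    have hinner : HasDerivAt (fun s : ℝ => u + a * s) a t := by
      simpa using ((hasDerivAt_id t).const_mul a).const_add u
    have hd2 : HasDerivAt (fun s : ℝ => Real.log (u + a * s)) ((u + a*t)⁻¹ * a) t :=
      by have := (Real.hasDerivAt_log (ne_of_gt (hpos t ht.le))).comp t hinner; exact this
    have hct : 0 < c * t := by positivity
    have hctc : c * t ≤ c := by nlinarith
    have hinner2 : HasDerivAt (fun s : ℝ => c * s) c t := by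
      simpa using (hasDerivAt_id t).const_mul c
    have hL' : HasDerivAt (fun s : ℝ => L (c * s)) (gAux (c*t) * c) t :=
      (hLderiv (c*t) hct hctc).comp t hinner2
    have hprod : HasDerivAt (fun s : ℝ => Real.log s * (Real.log (u+a*s) - Real.log u))
        (t⁻¹ * (Real.log (u+a*t) - Real.log u) + Real.log t * ((u+a*t)⁻¹ * a)) t :=
      hd1.mul (hd2.sub_const _)
    have hG' : HasDerivAt G
        (1/a * (t⁻¹ * (Real.log (u+a*t) - Real.log u) + Real.log t * ((u+a*t)⁻¹*a))
          - 1/a * (gAux (c*t) * c)) t :=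
      (hprod.const_mul (1/a)).sub (hL'.const_mul (1/a))
    convert hG' using 1
    have hgval : gAux (c*t) = Real.log (1 + c*t) / (c*t) := by
      simp [gAux, ne_of_gt hct]
    have hlog : Real.log (1 + c*t) = Real.log (u + a*t) - Real.log u := by
      rw [← Real.log_div (ne_of_gt (hpos t ht.le)) hune]
      congr 1
      rw [hc_def]
      field_simp
    rw [hf_def, hgval, hlog]
    have h1 : u + a * t ≠ 0 := ne_of_gt (hpos t ht.le)
    have h2 : c * t ≠ 0 := ne_of_gt hct
    field_simp
    ring
  -- FTC on [ε,1]
  have key : ∀ ε : ℝ, 0 < ε → ε ≤ 1 → ∫ t in ε..1, f t = G 1 - G ε := by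
    intro ε hε hε1
    refine intervalIntegral.integral_eq_sub_of_hasDerivAt (fun x hx => ?_) (hint.mono_set ?_)
    · rw [uIcc_of_le hε1] at hx
      exact hGderiv x (lt_of_lt_of_le hε hx.1) hx.2
    · rw [uIcc_of_le hε1, uIcc_of_le (by norm_num : (0:ℝ) ≤ 1)]
      exact Icc_subset_Icc hε.le le_rfl
  -- limit of the integral side
  have hIoc : IntegrableOn f (Icc (0:ℝ) 1) := by
    rw [integrableOn_Icc_iff_integrableOn_Ioc]
    exact (intervalIntegrable_iff_integrableOn_Ioc_of_le (by norm_num)).mp hint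
  have hA : Tendsto (fun ε : ℝ => ∫ t in ε..(1:ℝ), f t) (𝓝[>] 0)
      (𝓝 (∫ t in (0:ℝ)..1, f t)) := by
    have hco : ContinuousOn (fun x : ℝ => ∫ t in x..(1:ℝ), f t) (Icc 0 1) := by
      have := intervalIntegral.continuousOn_primitive_interval_left
        (f := f) (a := 0) (b := 1) (μ := volume) (by rwa [uIcc_of_le (by norm_num)])
      rwa [uIcc_of_le (by norm_num : (0:ℝ) ≤ 1)] at this
    have hid : Tendsto (fun ε : ℝ => ε) (𝓝[>] (0:ℝ)) (𝓝[Icc 0 1] 0) := by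
      rw [tendsto_nhdsWithin_iff]
      refine ⟨tendsto_id.mono_left nhdsWithin_le_nhds, ?_⟩
      filter_upwards [Ioo_mem_nhdsGT_of_mem (left_mem_Ico.2 one_pos)] with x hx
      exact ⟨hx.1.le, hx.2.le⟩
    exact ((hco 0 (left_mem_Icc.2 zero_le_one)).tendsto.comp hid)
  -- limit of G at 0⁺
  have hLcont : ContinuousOn L (Icc 0 c) := by
    have := intervalIntegral.continuousOn_primitive_interval'
      (hgint c hc.le le_rfl) (left_mem_uIcc (a := (0:ℝ)) (b := c))
    rwa [uIcc_of_le hc.le] at this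
  have h1 : Tendsto (fun ε : ℝ => L (c * ε)) (𝓝[>] (0:ℝ)) (𝓝 0) := by
    have hmul : Tendsto (fun ε : ℝ => c * ε) (𝓝[>] (0:ℝ)) (𝓝[Icc 0 c] 0) := by
      rw [tendsto_nhdsWithin_iff]
      constructor
      · have h : Tendsto (fun ε : ℝ => c * ε) (𝓝 0) (𝓝 (c * 0)) :=
          (continuous_const.mul continuous_id).tendsto 0
        rw [mul_zero] at h
        exact h.mono_left nhdsWithin_le_nhds
      · filter_upwards [Ioo_mem_nhdsGT_of_mem (left_mem_Ico.2 one_pos)] with x hx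
        exact ⟨le_of_lt (mul_pos hc hx.1), by nlinarith [hx.1, hx.2]⟩
    have hL0 : L 0 = 0 := intervalIntegral.integral_same
    have := (hLcont 0 (left_mem_Icc.2 hc.le)).tendsto.comp hmul
    rwa [hL0] at this
  have h2 : Tendsto (fun ε : ℝ => Real.log ε * (Real.log (u + a*ε) - Real.log u))
      (𝓝[>] (0:ℝ)) (𝓝 0) := by
    have hlogid : ∀ ε : ℝ, 0 < ε →
        Real.log (u + a*ε) - Real.log u = Real.log (1 + c*ε) := by
      intro ε hε
      rw [← Real.log_div (ne_of_gt (hpos ε hε.le)) hune]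
      congr 1
      rw [hc_def]; field_simp
    have hlow : Tendsto (fun ε : ℝ => c * (Real.log ε * ε)) (𝓝[>] (0:ℝ)) (𝓝 0) := by
      have h := tendsto_log_mul_rpow_nhdsGT_zero one_pos
      have h' : Tendsto (fun x : ℝ => Real.log x * x) (𝓝[>] (0:ℝ)) (𝓝 0) := by
        refine h.congr' ?_
        filter_upwards [self_mem_nhdsWithin] with x _
        rw [Real.rpow_one]
      simpa using h'.const_mul c
    refine tendsto_of_tendsto_of_tendsto_of_le_of_le' hlow tendsto_const_nhds ?_ ?_
    · filter_upwards [Ioo_mem_nhdsGT_of_mem (left_mem_Ico.2 one_pos)] with ε hε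
      have hlogε : Real.log ε ≤ 0 := Real.log_nonpos hε.1.le hε.2.le
      have hub : Real.log (1 + c*ε) ≤ c*ε := by
        have := Real.log_le_sub_one_of_pos (show (0:ℝ) < 1 + c*ε by nlinarith [hε.1])
        linarith
      rw [hlogid ε hε.1]
      have := mul_le_mul_of_nonpos_left hub hlogε
      calc c * (Real.log ε * ε) = Real.log ε * (c * ε) := by ring
        _ ≤ Real.log ε * Real.log (1 + c*ε) := this
    · filter_upwards [Ioo_mem_nhdsGT_of_mem (left_mem_Ico.2 one_pos)] with ε hε
      have hlogε : Real.log ε ≤ 0 := Real.log_nonpos hε.1.le hε.2.le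
      have hnn : 0 ≤ Real.log (1 + c*ε) := Real.log_nonneg (by nlinarith [hε.1])
      rw [hlogid ε hε.1]
      exact mul_nonpos_of_nonpos_of_nonneg hlogε hnn
  have hG0 : Tendsto G (𝓝[>] (0:ℝ)) (𝓝 0) := by
    have h := ((h2.const_mul (1/a)).sub (h1.const_mul (1/a)))
    rw [hG_def]
    simpa using h
  have hB : Tendsto (fun ε : ℝ => G 1 - G ε) (𝓝[>] (0:ℝ)) (𝓝 (G 1)) := by
    simpa using (tendsto_const_nhds (x := G 1) (f := 𝓝[>] (0:ℝ))).sub hG0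
  have heqev : (fun ε : ℝ => ∫ t in ε..(1:ℝ), f t) =ᶠ[𝓝[>] (0:ℝ)] fun ε => G 1 - G ε := by
    filter_upwards [Ioo_mem_nhdsGT_of_mem (left_mem_Ico.2 one_pos)] with ε hε
    exact key ε hε.1 hε.2.le
  have hval : (∫ t in (0:ℝ)..1, f t) = G 1 :=
    tendsto_nhds_unique (hA.congr' heqev) hB
  -- identify Li2 with -L c
  have hLi : Li2 (-(1-u)/u) = -(L c) := by
    have hneg : -(1-u)/u = -c := by rw [hc_def, ha_def]; ring
    rw [hneg, Li2]
    have h1' := intervalIntegral.integral_comp_neg (a := c) (b := 0)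
      (fun s => Real.log (1-s)/s)
    simp only [neg_zero] at h1'
    have h2' : (∫ x in c..(0:ℝ), Real.log (1 - -x) / -x)
        = ∫ x in c..(0:ℝ), -(Real.log (1+x)/x) := by
      refine intervalIntegral.integral_congr fun x _ => ?_
      rw [sub_neg_eq_add, div_neg]
    have h3' : (∫ x in (0:ℝ)..c, Real.log (1+x)/x) = L c := by
      refine intervalIntegral.integral_congr_ae (Eventually.of_forall fun x hx => ?_)
      rw [uIoc_of_le hc.le] at hx
      simp [gAux, ne_of_gt hx.1]
    rw [← h1', h2', intervalIntegral.integral_neg, intervalIntegral.integral_symm, h3']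
    ring
  -- final computation
  rw [hEq, hval, hG_def]
  simp only [Real.log_one, zero_mul, mul_zero, mul_one, zero_sub]
  rw [ha_def, hLi]
  ring
end

section
/- For every real u with 0 < u < 1, Li₂(-(1-u)/u) = -(1/2)·(log u)² - Li₂(1-u), where Li₂ is the dilogarithm. (Landen's identity.) -/
open Real Set Filter intervalIntegral

/-- The integrand of the dilog, patched at 0 to be continuous. -/
noncomputable def dilogAux : ℝ → ℝ :=
  Function.update (fun s : ℝ => Real.log (1 - s) / s) 0 (-1)

lemma dilogAux_eq {s : ℝ} (hs : s ≠ 0) : dilogAux s = Real.log (1 - s) / s :=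
  Function.update_of_ne hs _ _

lemma dilogAux_zero : dilogAux 0 = -1 := Function.update_self _ _ _

lemma dilogAux_continuousAt {x : ℝ} (hx : x < 1) : ContinuousAt dilogAux x := by
  rcases eq_or_ne x 0 with rfl | hx0
  · rw [dilogAux, continuousAt_update_same]
    have hd : HasDerivAt (fun s : ℝ => Real.log (1 - s)) (-1) 0 := by
      have := ((Real.hasDerivAt_log (by norm_num : (1:ℝ) - 0 ≠ 0)).comp 0
        ((hasDerivAt_id (0:ℝ)).const_sub 1))
      simpa [Function.comp_def] using this
    have := hasDerivAt_iff_tendsto_slope.mp hd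
    refine this.congr' ?_
    filter_upwards [self_mem_nhdsWithin] with s hs
    simp only [slope, vsub_eq_sub, sub_zero, Real.log_one]
    rw [smul_eq_mul, div_eq_inv_mul]

  · have hg : ContinuousAt (fun s : ℝ => Real.log (1 - s) / s) x := by
      have hc1 : ContinuousAt (fun s : ℝ => 1 - s) x :=
        (continuous_const.sub continuous_id).continuousAt
      have hc2 : ContinuousAt Real.log ((fun s : ℝ => 1 - s) x) :=
        Real.continuousAt_log (by simpa using sub_ne_zero.mpr (by linarith : (1:ℝ) ≠ x))
      exact (hc2.comp hc1).div continuousAt_id hx0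
    refine hg.congr ?_
    filter_upwards [isOpen_ne.mem_nhds hx0] with s hs
    rw [dilogAux_eq hs]

lemma Li2_eq (x : ℝ) : Li2 x = -∫ s in (0:ℝ)..x, dilogAux s := by
  unfold Li2
  congr 1
  apply intervalIntegral.integral_congr_ae
  have h0 : ∀ᵐ s : ℝ, s ≠ 0 := by
    refine MeasureTheory.ae_iff.mpr ?_
    simpa using (by simp : {a : ℝ | ¬a ≠ 0} = {0}) ▸ Real.volume_singleton
  filter_upwards [h0] with s hs _
  rw [dilogAux_eq hs]

lemma Li2_hasDerivAt {x : ℝ} (hx : x < 1) : HasDerivAt Li2 (-dilogAux x) x := by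
  have hcont : ∀ y ∈ Iio (1:ℝ), ContinuousAt dilogAux y := fun y hy =>
    dilogAux_continuousAt hy
  have hint : IntervalIntegrable dilogAux MeasureTheory.volume 0 x := by
    apply ContinuousOn.intervalIntegrable
    intro s hs
    refine (dilogAux_continuousAt ?_).continuousWithinAt
    rcases le_or_gt 0 x with h | h
    · rw [uIcc_of_le h] at hs; exact lt_of_le_of_lt hs.2 hx
    · rw [uIcc_of_ge h.le] at hs; exact lt_of_le_of_lt hs.2 one_pos
  have hmeas := (ContinuousAt.stronglyMeasurableAtFilter (μ := MeasureTheory.volume) isOpen_Iio hcont) x hx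
  have := intervalIntegral.integral_hasDerivAt_right hint hmeas (dilogAux_continuousAt hx)
  have h2 : Li2 = fun y => -∫ s in (0:ℝ)..y, dilogAux s := funext Li2_eq
  rw [h2]
  exact this.neg

lemma F_hasDerivAt {u : ℝ} (hu : 0 < u) (hu1 : u ≤ 1) :
    HasDerivAt (fun u : ℝ => Li2 (1 - u⁻¹) + (1/2) * (Real.log u) ^ 2 + Li2 (1 - u)) 0 u := by
  have hune : u ≠ 0 := hu.ne'
  have harg1 : 1 - u⁻¹ < 1 := by
    have : (0:ℝ) < u⁻¹ := inv_pos.mpr hu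
    linarith
  have harg2 : 1 - u < 1 := by linarith
  have h1 : HasDerivAt (fun u : ℝ => Li2 (1 - u⁻¹))
      (-dilogAux (1 - u⁻¹) * (u ^ 2)⁻¹) u := by
    have hinner : HasDerivAt (fun u : ℝ => 1 - u⁻¹) ((u ^ 2)⁻¹) u := by
      simpa using (hasDerivAt_inv hune).const_sub 1
    simpa [mul_comm, Function.comp_def] using (Li2_hasDerivAt harg1).comp u hinner
  have h2 : HasDerivAt (fun u : ℝ => (1/2) * (Real.log u) ^ 2) (Real.log u / u) u := by
    have := ((Real.hasDerivAt_log hune).pow 2).const_mul (1/2 : ℝ)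
    refine this.congr_deriv ?_
    field_simp
    norm_num
  have h3 : HasDerivAt (fun u : ℝ => Li2 (1 - u)) (dilogAux (1 - u)) u := by
    have hinner : HasDerivAt (fun u : ℝ => 1 - u) (-1) u := by
      simpa using (hasDerivAt_id u).const_sub 1
    simpa [Function.comp_def] using (Li2_hasDerivAt harg2).comp u hinner
  have hsum := (h1.add h2).add h3
  have hsum' : HasDerivAt (fun u : ℝ => Li2 (1 - u⁻¹) + (1/2) * (Real.log u) ^ 2 + Li2 (1 - u)) _ u := hsum
  convert hsum' using 1
  rcases eq_or_lt_of_le hu1 with rfl | hlt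
  · simp [dilogAux_zero, Real.log_one]
  · have hne1 : 1 - u⁻¹ ≠ 0 := by
      intro h
      have : u⁻¹ = 1 := by linarith
      rw [inv_eq_one] at this; exact hlt.ne this
    have hne2 : 1 - u ≠ 0 := by intro h; exact hlt.ne (by linarith)
    rw [dilogAux_eq hne1, dilogAux_eq hne2]
    have e1 : (1:ℝ) - (1 - u⁻¹) = u⁻¹ := by ring
    have e2 : (1:ℝ) - (1 - u) = u := by ring
    rw [e1, e2, Real.log_inv]
    have hden : u - 1 ≠ 0 := sub_ne_zero.mpr hlt.ne
    field_simp
    ring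

theorem stmt_14 (u : ℝ) (hu : 0 < u) (hu1 : u < 1) :
    Li2 (-(1 - u) / u) = -(1 / 2) * (Real.log u) ^ 2 - Li2 (1 - u) := by
  set F : ℝ → ℝ := fun u : ℝ => Li2 (1 - u⁻¹) + (1/2) * (Real.log u) ^ 2 + Li2 (1 - u) with hF
  have hFderiv : ∀ x ∈ Ioo u 1, HasDerivAt F ((fun _ => (0:ℝ)) x) x := fun x hx =>
    F_hasDerivAt (lt_trans hu hx.1) hx.2.le
  have hFcont : ContinuousOn F (Icc u 1) := by
    intro x hx
    exact (F_hasDerivAt (lt_of_lt_of_le hu hx.1) hx.2).continuousAt.continuousWithinAt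
  obtain ⟨c, _, hc⟩ := exists_hasDerivAt_eq_slope F (fun _ => (0:ℝ)) hu1 hFcont hFderiv
  have hF1 : F 1 = 0 := by
    simp [hF, Li2, Real.log_one]
  have hFu : F u = 0 := by
    have hslope : (F 1 - F u) / (1 - u) = 0 := hc.symm
    have : F 1 - F u = 0 := by
      rcases div_eq_zero_iff.mp hslope with h | h
      · exact h
      · linarith
    linarith
  have harg : -(1 - u) / u = 1 - u⁻¹ := by field_simp; ring
  rw [harg]
  have : Li2 (1 - u⁻¹) + (1/2) * (Real.log u) ^ 2 + Li2 (1 - u) = 0 := hFu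
  linarith
end
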